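/- arXiv:2006.02794 — 2 statements merged into one kernel-verified Lean document; each statement's English description precedes it below -/
import Mathlib

section
/- Let S be a set of positive integers, r ≥ 1 an integer, and n ≥ 0 an integer. Then D_{n,S,r} = Σ_{s∈S} (n)_s·D_{n−s,S,r} + r·Σ_{s∈S} s·(n)_{s−1}·D_{n−(s−1), S, r−1}, where (m)_j denotes the falling factorial m(m−1)⋯(m−j+1), D_{m,S,r} = 0 for m < 0, and both sums have only finitely many nonzero terms. -/
open Finset
open scoped Classical

def genSet (S : Set ℕ) (α : Type*) (R : Set α) : Set (List (List α)) :=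
  {L | (∀ l ∈ L, l ≠ [] ∧ l.Nodup ∧ l.length ∈ S) ∧
    L.Pairwise (fun l l' => ∀ x ∈ l, x ∉ l') ∧
    (∀ x : α, ∃ l ∈ L, x ∈ l) ∧
    ∀ i j : α, i ∈ R → j ∈ R → i ≠ j →
      ∀ l ∈ L, i ∈ l → j ∉ l}

theorem genSet_map_mem {S : Set ℕ} {α β : Type*} (e : α ≃ β) {R : Set α} {L : List (List α)}
    (hL : L ∈ genSet S α R) : L.map (List.map e) ∈ genSet S β (e '' R) := by
  obtain ⟨h1, h2, h3, h4⟩ := hL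
  refine ⟨?_, ?_, ?_, ?_⟩
  · intro l hl
    simp only [List.mem_map] at hl
    obtain ⟨a, ha, rfl⟩ := hl
    obtain ⟨x1, x2, x3⟩ := h1 a ha
    exact ⟨by simpa using x1, x2.map e.injective, by simpa using x3⟩
  · rw [List.pairwise_map]
    refine h2.imp_of_mem ?_
    intro a b ha hb hab x hx hx'
    simp only [List.mem_map] at hx hx'
    obtain ⟨y, hy, rfl⟩ := hx
    obtain ⟨z, hz, hez⟩ := hx'
    exact hab y hy (e.injective hez ▸ hz)
  · intro x
    obtain ⟨l, hl, hxl⟩ := h3 (e.symm x)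
    exact ⟨l.map e, List.mem_map_of_mem hl, by simpa using List.mem_map_of_mem (f := e) hxl⟩
  · rintro i j ⟨a, ha, rfl⟩ ⟨b, hb, rfl⟩ hij l hl hil hjl
    simp only [List.mem_map] at hl
    obtain ⟨m, hm, rfl⟩ := hl
    have hab : a ≠ b := fun h => hij (by rw [h])
    have hia : a ∈ m := by
      simp only [List.mem_map] at hil; obtain ⟨y, hy, hey⟩ := hil
      exact e.injective hey ▸ hy
    have hjb : b ∈ m := by
      simp only [List.mem_map] at hjl; obtain ⟨y, hy, hey⟩ := hjl
      exact e.injective hey ▸ hy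
    exact h4 a b ha hb hab m hm hia hjb

noncomputable def genSetEquiv (S : Set ℕ) {α β : Type*} (e : α ≃ β) (R : Set α) :
    genSet S α R ≃ genSet S β (e '' R) where
  toFun L := ⟨L.1.map (List.map e), genSet_map_mem e L.2⟩
  invFun L := ⟨L.1.map (List.map e.symm), by
    have h := genSet_map_mem e.symm L.2
    rwa [Equiv.symm_image_image] at h⟩
  left_inv L := by
    ext1
    simp [List.map_map, Function.comp_def]
  right_inv L := by
    ext1
    simp [List.map_map, Function.comp_def]

theorem card_genSet_relabel (S : Set ℕ) {α β : Type*} (e : α ≃ β) (R : Set α) :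
    Nat.card (genSet S β (e '' R)) = Nat.card (genSet S α R) :=
  (Nat.card_congr (genSetEquiv S e R)).symm

theorem genSet_finite (S : Set ℕ) (α : Type*) [Finite α] (R : Set α) :
    (genSet S α R).Finite := by
  have : Fintype α := Fintype.ofFinite α
  classical
  set N := Fintype.card α with hN
  -- every member has length ≤ N and inner lists have length ≤ N
  have hsub : genSet S α R ⊆ {L : List (List α) | L.length ≤ N ∧ ∀ l ∈ L, l.length ≤ N} := by
    rintro L ⟨h1, h2, h3, _⟩
    constructor
    · -- heads are distinct
      have hinj : Function.Injective (fun i : Fin L.length =>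
          (L.get i).head (h1 _ (List.get_mem L i)).1) := by
        intro i j hij
        by_contra hne
        have hpw := List.pairwise_iff_get.mp h2
        simp only at hij
        rcases lt_or_gt_of_ne hne with h | h
        · exact hpw i j h _ (List.head_mem _) (by rw [hij]; exact List.head_mem _)
        · exact hpw j i h _ (List.head_mem _) (by rw [← hij]; exact List.head_mem _)
      simpa using Fintype.card_le_of_injective _ hinj
    · intro l hl
      exact (h1 l hl).2.1.length_le_card
  refine Set.Finite.subset ?_ hsub
  have hT : {l : List α | l.length ≤ N}.Finite := List.finite_length_le α N
  have : Finite ↥{l : List α | l.length ≤ N} := hT.to_subtype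
  have himg : {L : List (List α) | L.length ≤ N ∧ ∀ l ∈ L, l.length ≤ N} ⊆
      (fun L : List ↥{l : List α | l.length ≤ N} => L.map Subtype.val) ''
        {L | L.length ≤ N} := by
    rintro L ⟨hlen, hmem⟩
    exact ⟨L.attachWith _ hmem, by simpa using hlen, List.unattach_attachWith⟩
  exact ((List.finite_length_le ↥{l : List α | l.length ≤ N} N).image _).subset himg

def headSet (S : Set ℕ) {α : Type*} (R : Set α) : Set (List α) :=
  {l | l ≠ [] ∧ l.Nodup ∧ l.length ∈ S ∧
    ∀ i j : α, i ∈ R → j ∈ R → i ≠ j → i ∈ l → j ∉ l}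

theorem attachWith_ne_nil {α : Type*} {p : α → Prop} {l : List α} {H : ∀ x ∈ l, p x}
    (h : l ≠ []) : l.attachWith p H ≠ [] := by
  intro hc
  have := congrArg List.length hc
  rw [List.length_attachWith] at this
  exact h (List.length_eq_zero_iff.mp this)

theorem nodup_attachWith {α : Type*} {p : α → Prop} {l : List α} {H : ∀ x ∈ l, p x}
    (h : l.Nodup) : (l.attachWith p H).Nodup := by
  have h' := h
  rw [← List.attachWith_map_subtype_val H] at h'
  exact h'.of_map

theorem mem_attachWith' {α : Type*} {p : α → Prop} {l : List α} {H : ∀ x ∈ l, p x}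
    {x : {a // p a}} : x ∈ l.attachWith p H ↔ x.1 ∈ l := by
  constructor
  · intro h
    have := List.mem_map_of_mem (f := Subtype.val) h
    rwa [List.attachWith_map_subtype_val] at this
  · intro h
    have : x.1 ∈ List.map Subtype.val (l.attachWith p H) := by
      rwa [List.attachWith_map_subtype_val]
    obtain ⟨y, hy, hyx⟩ := List.mem_map.mp this
    rwa [show x = y from Subtype.ext hyx.symm]

section HeadDecomp

variable {S : Set ℕ} {α : Type*} {R : Set α}

theorem genSet_ne_nil [Nonempty α] {L : List (List α)} (hL : L ∈ genSet S α R) : L ≠ [] := by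
  obtain ⟨l, hl, -⟩ := hL.2.2.1 (Classical.arbitrary α)
  exact List.ne_nil_of_mem hl

theorem genSet_head_mem_headSet [Nonempty α] {L : List (List α)} (hL : L ∈ genSet S α R) :
    L.head (genSet_ne_nil hL) ∈ headSet S R := by
  have haL : L.head (genSet_ne_nil hL) ∈ L := List.head_mem _
  have h1 := hL.1
  have h4 := hL.2.2.2
  exact ⟨(h1 _ haL).1, (h1 _ haL).2.1, (h1 _ haL).2.2,
    fun i j hi hj hij => h4 i j hi hj hij _ haL⟩

theorem genSet_tail_prop [Nonempty α] {L : List (List α)} (hL : L ∈ genSet S α R) :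
    ∀ l ∈ L.tail, ∀ x ∈ l, x ∉ L.head (genSet_ne_nil hL) := by
  intro l hl x hx hxa
  have hL' : L = L.head (genSet_ne_nil hL) :: L.tail := (List.cons_head_tail (genSet_ne_nil hL)).symm
  have hp : List.Pairwise (fun l l' => ∀ x ∈ l, x ∉ l') (L.head (genSet_ne_nil hL) :: L.tail) :=
    hL' ▸ hL.2.1
  exact (List.pairwise_cons.mp hp).1 l hl x hxa hx

theorem genSet_tail_mem [Nonempty α] {L : List (List α)} (hL : L ∈ genSet S α R) :
    L.tail.pmap (fun l hl => l.attachWith _ hl) (genSet_tail_prop hL) ∈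
      genSet S {x : α // x ∉ L.head (genSet_ne_nil hL)} {x | x.1 ∈ R} := by
  obtain ⟨h1, h2, h3, h4⟩ := id hL
  have hL' : L = L.head (genSet_ne_nil hL) :: L.tail := (List.cons_head_tail (genSet_ne_nil hL)).symm
  refine ⟨?_, ?_, ?_, ?_⟩
  · intro l' hl'
    obtain ⟨l, hl, rfl⟩ := List.mem_pmap.mp hl'
    have hmem : l ∈ L := hL' ▸ List.mem_cons_of_mem _ hl
    exact ⟨attachWith_ne_nil (h1 l hmem).1, nodup_attachWith (h1 l hmem).2.1,
      by rw [List.length_attachWith]; exact (h1 l hmem).2.2⟩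
  · rw [List.pairwise_pmap]
    have hp : List.Pairwise (fun l l' => ∀ x ∈ l, x ∉ l') L := h2
    rw [hL', List.pairwise_cons] at hp
    refine hp.2.imp_of_mem ?_
    intro l m hl hm hdisj h₁ h₂ x hx hx'
    rw [mem_attachWith'] at hx hx'
    exact hdisj x.1 hx hx'
  · rintro ⟨x, hxa⟩
    obtain ⟨l, hl, hxl⟩ := h3 x
    rw [hL', List.mem_cons] at hl
    rcases hl with rfl | hl
    · exact absurd hxl hxa
    · exact ⟨l.attachWith _ ((genSet_tail_prop hL) l hl),
        List.mem_pmap.mpr ⟨l, hl, rfl⟩, mem_attachWith'.mpr hxl⟩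
  · rintro ⟨i, hia⟩ ⟨j, hja⟩ hi hj hij l' hl' hil' hjl'
    obtain ⟨l, hl, rfl⟩ := List.mem_pmap.mp hl'
    rw [mem_attachWith'] at hil' hjl'
    have hmem : l ∈ L := hL' ▸ List.mem_cons_of_mem _ hl
    exact h4 i j hi hj (fun h => hij (Subtype.ext h)) l hmem hil' hjl'

theorem genSet_cons_mem {a : List α} (ha : a ∈ headSet S R)
    {L' : List (List {x : α // x ∉ a})} (hL' : L' ∈ genSet S {x : α // x ∉ a} {x | x.1 ∈ R}) :
    a :: L'.map (List.map Subtype.val) ∈ genSet S α R := by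
  obtain ⟨g1, g2, g3, g4⟩ := hL'
  refine ⟨?_, ?_, ?_, ?_⟩
  · intro l hl
    rw [List.mem_cons] at hl
    rcases hl with rfl | hl
    · exact ⟨ha.1, ha.2.1, ha.2.2.1⟩
    · obtain ⟨m, hm, rfl⟩ := List.mem_map.mp hl
      refine ⟨fun h => (g1 m hm).1 (by simpa using congrArg List.length h),
        (g1 m hm).2.1.map Subtype.val_injective, by simpa using (g1 m hm).2.2⟩
  · rw [List.pairwise_cons]
    constructor
    · intro l hl x hx hxl
      obtain ⟨m, hm, rfl⟩ := List.mem_map.mp hl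
      obtain ⟨y, hy, rfl⟩ := List.mem_map.mp hxl
      exact y.2 hx
    · rw [List.pairwise_map]
      refine g2.imp_of_mem ?_
      intro l m hl hm hdisj x hx hx'
      obtain ⟨y, hy, rfl⟩ := List.mem_map.mp hx
      obtain ⟨z, hz, hzy⟩ := List.mem_map.mp hx'
      exact hdisj y hy (by rwa [show z = y from Subtype.ext hzy] at hz)
  · intro x
    by_cases hx : x ∈ a
    · exact ⟨a, List.mem_cons_self, hx⟩
    · obtain ⟨l, hl, hxl⟩ := g3 ⟨x, hx⟩
      exact ⟨l.map Subtype.val, List.mem_cons_of_mem a (List.mem_map_of_mem hl),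
        List.mem_map_of_mem (f := Subtype.val) hxl⟩
  · intro i j hi hj hij l hl hil hjl
    rw [List.mem_cons] at hl
    rcases hl with rfl | hl
    · exact ha.2.2.2 i j hi hj hij hil hjl
    · obtain ⟨m, hm, rfl⟩ := List.mem_map.mp hl
      obtain ⟨y, hy, rfl⟩ := List.mem_map.mp hil
      obtain ⟨z, hz, hzj⟩ := List.mem_map.mp hjl
      subst hzj
      exact g4 y z hi hj (fun h => hij (congrArg Subtype.val h)) m hm hy hz

theorem pmap_attach_val {α : Type*} {P : α → Prop} :
    ∀ (t : List (List α)) (H : ∀ l ∈ t, ∀ x ∈ l, P x),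
      (t.pmap (fun l hl => l.attachWith P hl) H).map (List.map Subtype.val) = t := by
  intro t
  induction t with
  | nil => intro H; rfl
  | cons a t ih =>
      intro H
      simp only [List.pmap, List.map_cons, List.attachWith_map_subtype_val, List.cons.injEq]
      exact ⟨trivial, ih _⟩

theorem pmap_attach_of_map_val {α : Type*} {P : α → Prop} :
    ∀ (t : List (List {x : α // P x})) (H : ∀ l ∈ t.map (List.map Subtype.val), ∀ x ∈ l, P x),
      (t.map (List.map Subtype.val)).pmap (fun l hl => l.attachWith P hl) H = t := by
  intro t
  induction t with
  | nil => intro H; rfl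
  | cons a t ih =>
      intro H
      simp only [List.map_cons, List.pmap, List.cons.injEq]
      refine ⟨?_, ih _⟩
      apply List.map_injective_iff.mpr Subtype.val_injective
      rw [List.attachWith_map_subtype_val]

noncomputable def headDecomp (S : Set ℕ) {α : Type*} [Nonempty α] (R : Set α) :
    genSet S α R ≃ Σ l : headSet S R, genSet S {x : α // x ∉ l.1} {x | x.1 ∈ R} where
  toFun L := ⟨⟨L.1.head (genSet_ne_nil L.2), (genSet_head_mem_headSet L.2)⟩,
    ⟨L.1.tail.pmap (fun l hl => l.attachWith _ hl) (genSet_tail_prop L.2), (genSet_tail_mem L.2)⟩⟩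
  invFun p := ⟨p.1.1 :: p.2.1.map (List.map Subtype.val), genSet_cons_mem p.1.2 p.2.2⟩
  left_inv L := by
    ext1
    simp only
    rw [pmap_attach_val]
    exact List.cons_head_tail (genSet_ne_nil L.2)
  right_inv p := by
    obtain ⟨⟨a, ha⟩, ⟨L', hL'⟩⟩ := p
    refine Sigma.ext rfl ?_
    simp only [heq_eq_eq]
    apply heq_of_eq
    ext1
    simp only [List.tail_cons, List.head_cons]
    rw [pmap_attach_of_map_val]

end HeadDecomp

/-- The set of doubly ordered `(S,r)`-partitions of `{1,…,n+r}`: sequences of pairwise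
disjoint nonempty lists of distinct elements covering everything, with lengths in `S`,
the first `r` elements in distinct lists. -/
def srDoublySet (S : Set ℕ) (r n : ℕ) : Set (List (List (Fin (n + r)))) :=
  {L | (∀ l ∈ L, l ≠ [] ∧ l.Nodup ∧ l.length ∈ S) ∧
    L.Pairwise (fun l l' => ∀ x ∈ l, x ∉ l') ∧
    (∀ x : Fin (n + r), ∃ l ∈ L, x ∈ l) ∧
    ∀ i j : Fin (n + r), (i : ℕ) < r → (j : ℕ) < r → i ≠ j →
      ∀ l ∈ L, i ∈ l → j ∉ l}

/-- The number `D_{n,S,r}` of doubly ordered `(S,r)`-partitions. -/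
noncomputable def srDoubly (S : Set ℕ) (r n : ℕ) : ℕ := Nat.card (srDoublySet S r n)

/-- `D_{n,S,r}` with an integer argument, zero for negative arguments. -/
noncomputable def srDoublyZ (S : Set ℕ) (r : ℕ) (n : ℤ) : ℤ :=
  if 0 ≤ n then srDoubly S r n.toNat else 0

/-- standard form: a finite type with specified special set has genSet-card `srDoubly`. -/
theorem card_genSet_eq_srDoubly (S : Set ℕ) {β : Type*} [Fintype β] (R : Set β)
    (r' n' : ℕ) (h1 : Nat.card R = r') (h2 : Nat.card {x : β // x ∉ R} = n') :
    Nat.card (genSet S β R) = srDoubly S r' n' := by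
  have hR : Fintype.card {x // x ∈ R} = r' := by
    rw [← h1]; exact (Nat.card_eq_fintype_card).symm
  have hRc : Fintype.card {x // ¬ x ∈ R} = n' := by
    rw [← h2]; exact (Nat.card_eq_fintype_card).symm
  set e1 : {x // x ∈ R} ≃ Fin r' := Fintype.equivFinOfCardEq hR
  set e2 : {x // ¬ x ∈ R} ≃ Fin n' := Fintype.equivFinOfCardEq hRc
  set e : β ≃ Fin (n' + r') :=
    ((Equiv.sumCompl (· ∈ R)).symm.trans (e1.sumCongr e2)).trans
      (finSumFinEquiv.trans (finCongr (Nat.add_comm r' n')))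
  have him : e '' R = {i : Fin (n' + r') | (i : ℕ) < r'} := by
    ext i
    simp only [Set.mem_image, Set.mem_setOf_eq]
    constructor
    · rintro ⟨x, hx, rfl⟩
      have hs : (Equiv.sumCompl (· ∈ R)).symm x = Sum.inl ⟨x, hx⟩ := by
        rw [Equiv.symm_apply_eq]; rfl
      simp only [e, Equiv.trans_apply, hs, Equiv.sumCongr_apply, Sum.map_inl,
        finSumFinEquiv_apply_left, finCongr_apply]
      simp
    · intro hi
      set x := e.symm i with hx
      refine ⟨x, ?_, by simp [hx]⟩
      by_contra hxR
      have hs : (Equiv.sumCompl (· ∈ R)).symm x = Sum.inr ⟨x, hxR⟩ := by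
        rw [Equiv.symm_apply_eq]; rfl
      have : e x = i := by simp [hx]
      rw [show e x = ((finSumFinEquiv.trans (finCongr (Nat.add_comm r' n')))
          ((e1.sumCongr e2) ((Equiv.sumCompl (· ∈ R)).symm x))) from rfl, hs] at this
      simp only [Equiv.sumCongr_apply, Sum.map_inr, Equiv.trans_apply,
        finSumFinEquiv_apply_right, finCongr_apply] at this
      rw [← this] at hi
      simp [Fin.natAdd] at hi
  have : genSet S (Fin (n' + r')) {i : Fin (n' + r') | (i : ℕ) < r'} =
      srDoublySet S r' n' := rfl
  rw [srDoubly, ← this, ← him, card_genSet_relabel S e R]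

/-- nodup lists of length `m` with all entries satisfying `P` ≃ embeddings into the subtype. -/
noncomputable def listEmbEquiv {γ : Type*} (P : γ → Prop) (m : ℕ) :
    {l : List γ // l.Nodup ∧ l.length = m ∧ ∀ x ∈ l, P x} ≃ (Fin m ↪ {x : γ // P x}) where
  toFun l := ⟨fun i => ⟨l.1.get ⟨i.1, by rw [l.2.2.1]; exact i.2⟩,
      l.2.2.2 _ (List.get_mem _ _)⟩, by
    intro i j hij
    have := congrArg Subtype.val hij
    simp only at this
    have h2 := List.nodup_iff_injective_get.mp l.2.1 this
    have := congrArg Fin.val h2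
    exact Fin.ext this⟩
  invFun f := ⟨List.ofFn (fun i => (f i).1), by
    refine ⟨List.nodup_ofFn.mpr ?_, by simp, ?_⟩
    · intro i j hij
      exact f.injective (Subtype.ext hij)
    · intro x hx
      obtain ⟨i, rfl⟩ := List.mem_ofFn.mp hx
      exact (f i).2⟩
  left_inv l := by
    ext1
    apply List.ext_getElem (by simp [l.2.2.1])
    intro i h1 h2
    simp
  right_inv f := by
    ext i
    simp

theorem insertNth_cases {t : ℕ} (p : Fin (t+1)) (i : Fin (t+1)) :
    i = p ∨ ∃ j : Fin t, i = p.succAbove j := by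
  by_cases h : i = p
  · exact Or.inl h
  · obtain ⟨j, hj⟩ := Fin.exists_succAbove_eq h
    exact Or.inr ⟨j, hj.symm⟩

theorem insertNth_eta {γ : Type*} {t : ℕ} (p : Fin (t+1)) (g : Fin (t+1) → γ) :
    p.insertNth (g p) (fun j => g (p.succAbove j)) = g := by
  funext i
  rcases insertNth_cases p i with rfl | ⟨j, rfl⟩
  · rw [Fin.insertNth_apply_same]
  · rw [Fin.insertNth_apply_succAbove]

theorem insertNth_injective {γ : Type*} {t : ℕ} (p : Fin (t+1)) (a : γ) (f : Fin t → γ)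
    (ha : ∀ j, f j ≠ a) (hf : Function.Injective f) :
    Function.Injective (p.insertNth a f) := by
  intro i1 i2 h
  rcases insertNth_cases p i1 with h1 | ⟨j1, h1⟩ <;>
    rcases insertNth_cases p i2 with h2 | ⟨j2, h2⟩ <;> subst h1 <;> subst h2
  · rfl
  · rw [Fin.insertNth_apply_same, Fin.insertNth_apply_succAbove] at h
    exact absurd h.symm (ha j2)
  · rw [Fin.insertNth_apply_same, Fin.insertNth_apply_succAbove] at h
    exact absurd h (ha j1)
  · rw [Fin.insertNth_apply_succAbove, Fin.insertNth_apply_succAbove] at h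
    rw [hf h]

theorem insertNth_existsUnique {γ : Type*} {t : ℕ} (P : γ → Prop) (p : Fin (t+1)) (a : γ)
    (f : Fin t → γ) (hPa : P a) (hPf : ∀ j, ¬ P (f j)) :
    ∃! q : Fin (t+1), P ((p.insertNth (α := fun _ => γ) a f) q) := by
  refine ⟨p, by show P _; rwa [Fin.insertNth_apply_same], ?_⟩
  intro q hq
  rcases insertNth_cases p q with rfl | ⟨j, rfl⟩
  · rfl
  · rw [Fin.insertNth_apply_succAbove] at hq
    exact absurd hq (hPf j)

noncomputable def uniqueSpecEquiv {γ : Type*} (P : γ → Prop) (t : ℕ) :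
    {g : Fin (t+1) ↪ γ // ∃! p : Fin (t+1), P (g p)} ≃
      (Fin (t+1) × {x : γ // P x} × (Fin t ↪ {x : γ // ¬ P x})) where
  toFun g :=
    have hch : ∀ q, P (g.1 q) → q = Fintype.choose _ g.2 := by
      intro q hq
      obtain ⟨p₀, hp₀, hu⟩ := g.2
      have h1 := hu q hq
      have h2 := hu _ (Fintype.choose_spec (fun p => P (g.1 p)) g.2)
      rw [h1]; exact h2.symm
    (Fintype.choose _ g.2, ⟨g.1 (Fintype.choose _ g.2),
        Fintype.choose_spec (fun p => P (g.1 p)) g.2⟩,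
      ⟨fun j => ⟨g.1 ((Fintype.choose _ g.2).succAbove j), fun hc =>
        Fin.succAbove_ne (Fintype.choose _ g.2) j (hch _ hc)⟩, fun i j hij =>
        Fin.succAbove_right_injective (g.1.injective (congrArg Subtype.val hij))⟩)
  invFun x :=
    ⟨⟨x.1.insertNth x.2.1.1 (fun j => (x.2.2 j).1),
      insertNth_injective x.1 x.2.1.1 _ (fun j hc => (x.2.2 j).2 (hc ▸ x.2.1.2))
        (fun i j hij => x.2.2.injective (Subtype.ext hij))⟩,
      insertNth_existsUnique P x.1 x.2.1.1 _ x.2.1.2 (fun j => (x.2.2 j).2)⟩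
  left_inv g := by
    ext1
    ext i
    simp only [Function.Embedding.coeFn_mk]
    exact congrFun (insertNth_eta (Fintype.choose _ g.2) g.1) i
  right_inv x := by
    obtain ⟨p, a, f⟩ := x
    have hex : ∃! q : Fin (t+1), P ((p.insertNth (α := fun _ => γ) a.1 (fun j => (f j).1)) q) :=
      insertNth_existsUnique P p a.1 _ a.2 (fun j => (f j).2)
    have hc : Fintype.choose (fun q => P ((p.insertNth (α := fun _ => γ) a.1 (fun j => (f j).1)) q)) hex = p := by
      obtain ⟨p₀, hp₀, hu⟩ := id hex
      have h1 := hu _ (Fintype.choose_spec (fun q => P ((p.insertNth (α := fun _ => γ) a.1 (fun j => (f j).1)) q)) hex)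
      have h2 := hu p (by show P _; rw [Fin.insertNth_apply_same]; exact a.2)
      rw [h1, h2]
    refine Prod.ext ?_ (Prod.ext ?_ ?_)
    · simp only
      convert hc
      rfl
    · simp only
      apply Subtype.ext
      simp only [Function.Embedding.coeFn_mk]
      rw [hc, Fin.insertNth_apply_same]
    · simp only
      ext j
      simp only [Function.Embedding.coeFn_mk]
      congr 1
      rw [hc, Fin.insertNth_apply_succAbove]

noncomputable def listEmbPlain {γ : Type*} (m : ℕ) :
    {l : List γ // l.Nodup ∧ l.length = m} ≃ (Fin m ↪ γ) where
  toFun l := ⟨fun i => l.1.get ⟨i.1, by rw [l.2.2]; exact i.2⟩, by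
    intro i j hij
    have h2 := List.nodup_iff_injective_get.mp l.2.1 hij
    have := congrArg Fin.val h2
    exact Fin.ext this⟩
  invFun f := ⟨List.ofFn f, by
    refine ⟨List.nodup_ofFn.mpr f.injective, by simp⟩⟩
  left_inv l := by
    ext1
    apply List.ext_getElem (by simp [l.2.2])
    intro i h1 h2
    simp
  right_inv f := by
    ext i
    simp

section Counts
variable (r n : ℕ)

abbrev Spec : Fin (n + r) → Prop := fun x => (x : ℕ) < r

def specEquivFin : {x : Fin (n + r) // (x : ℕ) < r} ≃ Fin r where
  toFun x := ⟨x.1.1, x.2⟩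
  invFun i := ⟨⟨i.1, by omega⟩, i.2⟩
  left_inv x := by ext; rfl
  right_inv i := by ext; rfl

theorem card_spec : Fintype.card {x : Fin (n + r) // (x : ℕ) < r} = r := by
  rw [Fintype.card_congr (specEquivFin r n), Fintype.card_fin]

theorem card_nonspec : Fintype.card {x : Fin (n + r) // ¬ (x : ℕ) < r} = n := by
  rw [Fintype.card_subtype_compl, card_spec, Fintype.card_fin]
  omega

/-- heads avoiding the special elements, of length `s` -/
theorem card_setA (s : ℕ) :
    Nat.card {l : List (Fin (n + r)) // l.Nodup ∧ l.length = s ∧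
      ∀ x ∈ l, ¬ (x : ℕ) < r} = n.descFactorial s := by
  rw [Nat.card_congr (listEmbEquiv (fun x : Fin (n + r) => ¬ (x : ℕ) < r) s),
    Nat.card_eq_fintype_card, Fintype.card_embedding_eq, card_nonspec, Fintype.card_fin]

/-- heads containing a special element, of length `t+1` -/
theorem card_setB (t : ℕ) :
    Nat.card {l : List (Fin (n + r)) // (l.Nodup ∧ l.length = t + 1) ∧
      (∃ x ∈ l, (x : ℕ) < r) ∧ ∀ i j : Fin (n + r), (i : ℕ) < r → (j : ℕ) < r →
        i ≠ j → i ∈ l → j ∉ l} = (t + 1) * r * n.descFactorial t := by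
  have e1 := (Equiv.subtypeSubtypeEquivSubtypeInter
    (fun l : List (Fin (n + r)) => l.Nodup ∧ l.length = t + 1)
    (fun l => (∃ x ∈ l, (x : ℕ) < r) ∧ ∀ i j : Fin (n + r), (i : ℕ) < r → (j : ℕ) < r →
        i ≠ j → i ∈ l → j ∉ l)).symm
  rw [Nat.card_congr e1]
  have e2 : {x : {l : List (Fin (n + r)) // l.Nodup ∧ l.length = t + 1} //
      (∃ y ∈ x.1, (y : ℕ) < r) ∧ ∀ i j : Fin (n + r), (i : ℕ) < r → (j : ℕ) < r →
        i ≠ j → i ∈ x.1 → j ∉ x.1} ≃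
      {g : Fin (t+1) ↪ Fin (n + r) // ∃! p : Fin (t+1), ((g p : Fin (n+r)) : ℕ) < r} := by
    refine Equiv.subtypeEquiv (listEmbPlain (t+1)) ?_
    intro l
    have hmem : ∀ x : Fin (n + r), x ∈ l.1 ↔ ∃ p : Fin (t+1), (listEmbPlain (t+1) l) p = x := by
      intro x
      constructor
      · intro hx
        obtain ⟨i, hi⟩ := List.mem_iff_get.mp hx
        refine ⟨⟨i.1, Nat.lt_of_lt_of_le i.2 (Nat.le_of_eq l.2.2)⟩, ?_⟩
        show l.1.get _ = x
        rw [show (⟨i.1, by exact i.2⟩ : Fin l.1.length) = i from Fin.ext rfl]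
        exact hi
      · rintro ⟨p, rfl⟩
        exact List.get_mem _ _
    set g := listEmbPlain (t+1) l with hg
    constructor
    · rintro ⟨⟨x, hx, hxsp⟩, hno2⟩
      obtain ⟨p, hp⟩ := (hmem x).mp hx
      refine ⟨p, by show ((g p : Fin (n+r)) : ℕ) < r; rw [hp]; exact hxsp, ?_⟩
      intro q hq
      by_contra hne
      have hgq : (g q : Fin (n + r)) ∈ l.1 := (hmem _).mpr ⟨q, rfl⟩
      have hgp : (g p : Fin (n + r)) ∈ l.1 := (hmem _).mpr ⟨p, rfl⟩
      have hvne : (g q : Fin (n + r)) ≠ g p := fun h => hne (g.injective h)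
      exact hno2 (g q) (g p) hq (by rw [hp]; exact hxsp) hvne hgq hgp
    · rintro ⟨p, hp, hu⟩
      refine ⟨⟨g p, (hmem _).mpr ⟨p, rfl⟩, hp⟩, ?_⟩
      intro i j hi hj hij hil hjl
      obtain ⟨pi, hpi⟩ := (hmem i).mp hil
      obtain ⟨pj, hpj⟩ := (hmem j).mp hjl
      have hpq : pi = pj :=
        (hu pi (by show ((g pi : Fin (n+r)) : ℕ) < r; rw [hpi]; exact hi)).trans
          (hu pj (by show ((g pj : Fin (n+r)) : ℕ) < r; rw [hpj]; exact hj)).symm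
      exact hij (by rw [← hpi, ← hpj, hpq])
  rw [Nat.card_congr e2, Nat.card_congr (uniqueSpecEquiv (fun x : Fin (n+r) => (x : ℕ) < r) t),
    Nat.card_eq_fintype_card, Fintype.card_prod, Fintype.card_prod, Fintype.card_fin,
    card_spec r n, Fintype.card_embedding_eq, Fintype.card_fin, card_nonspec r n]
  ring
end Counts

theorem card_spec' (r n : ℕ) : Nat.card {x : Fin (n + r) // (x : ℕ) < r} = r := by
  rw [Nat.card_eq_fintype_card, card_spec]

theorem card_nonspec' (r n : ℕ) : Nat.card {x : Fin (n + r) // ¬ (x : ℕ) < r} = n := by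
  rw [Nat.card_eq_fintype_card, card_nonspec]

theorem nat_card_compl {γ : Type*} [Finite γ] (p : γ → Prop) :
    Nat.card {x : γ // ¬ p x} = Nat.card γ - Nat.card {x : γ // p x} := by
  haveI := Fintype.ofFinite γ
  classical
  rw [Nat.card_eq_fintype_card, Nat.card_eq_fintype_card, Nat.card_eq_fintype_card,
    Fintype.card_subtype_compl]

section Fib
variable (S : Set ℕ) (r n : ℕ)

theorem card_mem_list {γ : Type*} [Fintype γ] {a : List γ} (ha : a.Nodup) :
    Nat.card {y : γ // y ∈ a} = a.length := by
  have e : {y : γ // y ∈ a} ≃ {y : γ // y ∈ a.toFinset} :=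
    Equiv.subtypeEquivRight (by intro y; simp)
  rw [Nat.card_congr e, Nat.card_eq_finsetCard, List.toFinset_card_of_nodup ha]

/-- Case A fiber: head contains no special element. -/
theorem fibA {a : List (Fin (n + r))} (hnd : a.Nodup)
    (hA : ∀ x ∈ a, ¬ (x : ℕ) < r) :
    Nat.card (genSet S {x : Fin (n + r) // x ∉ a} {x | (x.1 : ℕ) < r}) =
      srDoubly S r (n - a.length) ∧ a.length ≤ n := by
  have hlen : Nat.card {y : Fin (n+r) // y ∈ a} = a.length := card_mem_list hnd
  -- specials of the fiber
  have e1 : {x : {x : Fin (n + r) // x ∉ a} // (x.1 : ℕ) < r} ≃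
      {y : Fin (n + r) // (y : ℕ) < r} :=
    ⟨fun x => ⟨x.1.1, x.2⟩, fun y => ⟨⟨y.1, fun hy => hA y.1 hy y.2⟩, y.2⟩,
      fun x => by ext; rfl, fun y => by ext; rfl⟩
  have h1 : Nat.card {x : {x : Fin (n + r) // x ∉ a} // (x.1 : ℕ) < r} = r := by
    rw [Nat.card_congr e1, card_spec']
  -- nonspecials in a
  have e3 : {z : {y : Fin (n+r) // ¬ (y : ℕ) < r} // z.1 ∈ a} ≃ {y : Fin (n+r) // y ∈ a} :=
    ⟨fun z => ⟨z.1.1, z.2⟩, fun y => ⟨⟨y.1, hA y.1 y.2⟩, y.2⟩,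
      fun z => by ext; rfl, fun y => by ext; rfl⟩
  have hsub : Nat.card {z : {y : Fin (n+r) // ¬ (y : ℕ) < r} // z.1 ∈ a} = a.length := by
    rw [Nat.card_congr e3, hlen]
  have hle : a.length ≤ n := by
    have h := Finite.card_subtype_le (α := {y : Fin (n+r) // ¬ (y : ℕ) < r})
      (fun z => z.1 ∈ a)
    rw [card_nonspec' r n, hsub] at h
    exact h
  -- complement count
  have e2 : {x : {x : Fin (n + r) // x ∉ a} // ¬ (x.1 : ℕ) < r} ≃
      {z : {y : Fin (n+r) // ¬ (y : ℕ) < r} // z.1 ∉ a} :=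
    ⟨fun x => ⟨⟨x.1.1, x.2⟩, x.1.2⟩, fun z => ⟨⟨z.1.1, z.2⟩, z.1.2⟩,
      fun x => by ext; rfl, fun z => by ext; rfl⟩
  have h2 : Nat.card {x : {x : Fin (n + r) // x ∉ a} // ¬ (x.1 : ℕ) < r} = n - a.length := by
    rw [Nat.card_congr e2, nat_card_compl, card_nonspec' r n, hsub]
  refine ⟨?_, hle⟩
  exact card_genSet_eq_srDoubly S {x : {x : Fin (n + r) // x ∉ a} | (x.1 : ℕ) < r}
    r (n - a.length) h1 h2

/-- Case B fiber: head contains a special element. -/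
theorem fibB (hr : 1 ≤ r) {a : List (Fin (n + r))} (hnd : a.Nodup)
    (hno2 : ∀ i j : Fin (n + r), (i : ℕ) < r → (j : ℕ) < r → i ≠ j → i ∈ a → j ∉ a)
    (hB : ∃ x ∈ a, (x : ℕ) < r) :
    Nat.card (genSet S {x : Fin (n + r) // x ∉ a} {x | (x.1 : ℕ) < r}) =
      srDoubly S (r - 1) (n - (a.length - 1)) ∧ a.length - 1 ≤ n ∧ 1 ≤ a.length := by
  obtain ⟨x0, hx0a, hx0⟩ := hB
  have hlen : Nat.card {y : Fin (n+r) // y ∈ a} = a.length := card_mem_list hnd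
  have h1le : 1 ≤ a.length := List.length_pos_iff.mpr (List.ne_nil_of_mem hx0a)
  -- specials in a: exactly one
  have hone : Nat.card {z : {y : Fin (n+r) // (y : ℕ) < r} // z.1 ∈ a} = 1 := by
    haveI : Fintype {z : {y : Fin (n+r) // (y : ℕ) < r} // z.1 ∈ a} := Fintype.ofFinite _
    rw [Nat.card_eq_fintype_card, Fintype.card_eq_one_iff]
    refine ⟨⟨⟨x0, hx0⟩, hx0a⟩, ?_⟩
    rintro ⟨⟨y, hy⟩, hya⟩
    by_cases hxy : y = x0
    · subst hxy; rfl
    · exact absurd hx0a (hno2 y x0 hy hx0 hxy hya)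
  -- specials of the fiber: r - 1
  have e1 : {x : {x : Fin (n + r) // x ∉ a} // (x.1 : ℕ) < r} ≃
      {z : {y : Fin (n+r) // (y : ℕ) < r} // ¬ z.1 ∈ a} :=
    ⟨fun x => ⟨⟨x.1.1, x.2⟩, x.1.2⟩, fun z => ⟨⟨z.1.1, z.2⟩, z.1.2⟩,
      fun x => by ext; rfl, fun z => by ext; rfl⟩
  have h1 : Nat.card {x : {x : Fin (n + r) // x ∉ a} // (x.1 : ℕ) < r} = r - 1 := by
    rw [Nat.card_congr e1, nat_card_compl, card_spec' r n, hone]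
  -- nonspecials in a: a.length - 1
  have e3 : {z : {y : Fin (n+r) // y ∈ a} // ¬ (z.1 : ℕ) < r} ≃
      {z : {y : Fin (n+r) // ¬ (y : ℕ) < r} // z.1 ∈ a} :=
    ⟨fun z => ⟨⟨z.1.1, z.2⟩, z.1.2⟩, fun z => ⟨⟨z.1.1, z.2⟩, z.1.2⟩,
      fun z => by ext; rfl, fun z => by ext; rfl⟩
  have e4 : {z : {y : Fin (n+r) // y ∈ a} // (z.1 : ℕ) < r} ≃
      {z : {y : Fin (n+r) // (y : ℕ) < r} // z.1 ∈ a} :=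
    ⟨fun z => ⟨⟨z.1.1, z.2⟩, z.1.2⟩, fun z => ⟨⟨z.1.1, z.2⟩, z.1.2⟩,
      fun z => by ext; rfl, fun z => by ext; rfl⟩
  have hsub : Nat.card {z : {y : Fin (n+r) // ¬ (y : ℕ) < r} // z.1 ∈ a} =
      a.length - 1 := by
    rw [← Nat.card_congr e3, nat_card_compl, hlen, Nat.card_congr e4, hone]
  have hle : a.length - 1 ≤ n := by
    have h := Finite.card_subtype_le (α := {y : Fin (n+r) // ¬ (y : ℕ) < r})
      (fun z => z.1 ∈ a)
    rw [card_nonspec' r n, hsub] at h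
    exact h
  have e2 : {x : {x : Fin (n + r) // x ∉ a} // ¬ (x.1 : ℕ) < r} ≃
      {z : {y : Fin (n+r) // ¬ (y : ℕ) < r} // z.1 ∉ a} :=
    ⟨fun x => ⟨⟨x.1.1, x.2⟩, x.1.2⟩, fun z => ⟨⟨z.1.1, z.2⟩, z.1.2⟩,
      fun x => by ext; rfl, fun z => by ext; rfl⟩
  have h2 : Nat.card {x : {x : Fin (n + r) // x ∉ a} // ¬ (x.1 : ℕ) < r} =
      n - (a.length - 1) := by
    rw [Nat.card_congr e2, nat_card_compl, card_nonspec' r n, hsub]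
  exact ⟨card_genSet_eq_srDoubly S {x : {x : Fin (n + r) // x ∉ a} | (x.1 : ℕ) < r}
    (r - 1) (n - (a.length - 1)) h1 h2, hle, h1le⟩
end Fib

theorem srDoublyZ_natCast (S : Set ℕ) (r m : ℕ) : srDoublyZ S r (m : ℤ) = srDoubly S r m := by
  simp [srDoublyZ]

/-- The main recurrence, natural number version. -/
theorem srDoubly_rec_nat (S : Set ℕ) (hS : ∀ s ∈ S, 0 < s) (r n : ℕ) (hr : 1 ≤ r) :
    srDoubly S r n =
      (∑ s ∈ (range (n + r + 1)).filter (· ∈ S), n.descFactorial s * srDoubly S r (n - s)) +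
      ∑ s ∈ (range (n + r + 1)).filter (· ∈ S),
        s * r * n.descFactorial (s - 1) * srDoubly S (r - 1) (n - (s - 1)) := by
  classical
  haveI : Nonempty (Fin (n + r)) := ⟨⟨0, by omega⟩⟩
  set R : Set (Fin (n + r)) := {i : Fin (n + r) | (i : ℕ) < r} with hR
  set H := headSet S R with hH
  -- finiteness
  have hHfin : H.Finite := by
    refine Set.Finite.subset (List.finite_length_le (Fin (n + r)) (n + r)) ?_
    intro l hl
    simpa using hl.2.1.length_le_card
  haveI : Fintype ↥H := hHfin.fintype
  haveI fibFin : ∀ l : ↥H, Fintype ↥(genSet S {x : Fin (n + r) // x ∉ l.1} {x | x.1 ∈ R}) :=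
    fun l => (genSet_finite S _ _).fintype
  -- Step 1+2: decomposition
  have h0 : srDoubly S r n = ∑ l : ↥H, Nat.card
      (genSet S {x : Fin (n + r) // x ∉ l.1} {x | x.1 ∈ R}) := by
    have : srDoublySet S r n = genSet S (Fin (n + r)) R := rfl
    rw [srDoubly, this, Nat.card_congr (headDecomp S R), Nat.card_eq_fintype_card,
      Fintype.card_sigma]
    exact Finset.sum_congr rfl (fun l _ => (Nat.card_eq_fintype_card).symm)
  -- Step 3: per-head evaluation
  have h1 : ∀ l : ↥H, Nat.card (genSet S {x : Fin (n + r) // x ∉ l.1} {x | x.1 ∈ R}) =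
      if ∀ x ∈ l.1, ¬ (x : ℕ) < r then srDoubly S r (n - l.1.length)
      else srDoubly S (r - 1) (n - (l.1.length - 1)) := by
    intro l
    by_cases hA : ∀ x ∈ l.1, ¬ (x : ℕ) < r
    · rw [if_pos hA]
      exact (fibA S r n l.2.2.1 hA).1
    · rw [if_neg hA]
      push_neg at hA
      exact (fibB S r n hr l.2.2.1 l.2.2.2.2 hA).1
  rw [h0, Finset.sum_congr rfl (fun l _ => h1 l), Finset.sum_ite]
  -- Step 4: fiberwise grouping
  set T := range (n + r + 1) with hT
  have hmaps : ∀ l : ↥H, l.1.length ∈ T := by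
    intro l
    simp only [hT, mem_range]
    have := l.2.2.1.length_le_card
    simp at this
    omega
  have hgroupA : ∑ l ∈ univ.filter (fun l : ↥H => ∀ x ∈ l.1, ¬ (x : ℕ) < r),
      srDoubly S r (n - l.1.length) =
      ∑ s ∈ T, (univ.filter (fun l : ↥H => (∀ x ∈ l.1, ¬ (x : ℕ) < r) ∧ l.1.length = s)).card *
        srDoubly S r (n - s) := by
    rw [← Finset.sum_fiberwise_of_maps_to (g := fun l : ↥H => l.1.length)
      (fun l _ => hmaps l) (fun l => srDoubly S r (n - l.1.length))]
    refine Finset.sum_congr rfl (fun s _ => ?_)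
    rw [Finset.filter_filter]
    rw [Finset.sum_congr rfl (fun l hl => by
      rw [(Finset.mem_filter.mp hl).2.2]), Finset.sum_const, smul_eq_mul]
  have hgroupB : ∑ l ∈ univ.filter (fun l : ↥H => ¬ ∀ x ∈ l.1, ¬ (x : ℕ) < r),
      srDoubly S (r - 1) (n - (l.1.length - 1)) =
      ∑ s ∈ T, (univ.filter (fun l : ↥H => (¬ ∀ x ∈ l.1, ¬ (x : ℕ) < r) ∧ l.1.length = s)).card *
        srDoubly S (r - 1) (n - (s - 1)) := by
    rw [← Finset.sum_fiberwise_of_maps_to (g := fun l : ↥H => l.1.length)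
      (fun l _ => hmaps l) (fun l => srDoubly S (r - 1) (n - (l.1.length - 1)))]
    refine Finset.sum_congr rfl (fun s _ => ?_)
    rw [Finset.filter_filter]
    rw [Finset.sum_congr rfl (fun l hl => by
      rw [(Finset.mem_filter.mp hl).2.2]), Finset.sum_const, smul_eq_mul]
  rw [hgroupA, hgroupB]
  -- Step 5: count the heads in each fiber
  have hcardA : ∀ s : ℕ, (univ.filter (fun l : ↥H =>
      (∀ x ∈ l.1, ¬ (x : ℕ) < r) ∧ l.1.length = s)).card =
      if s ∈ S then n.descFactorial s else 0 := by
    intro s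
    by_cases hsS : s ∈ S
    · rw [if_pos hsS]
      have hc : (univ.filter (fun l : ↥H =>
          (∀ x ∈ l.1, ¬ (x : ℕ) < r) ∧ l.1.length = s)).card =
          Nat.card {l : ↥H // (∀ x ∈ l.1, ¬ (x : ℕ) < r) ∧ l.1.length = s} := by
        rw [Nat.card_eq_fintype_card, Fintype.card_subtype]
      rw [hc, ← card_setA r n s]
      refine Nat.card_congr ((Equiv.subtypeSubtypeEquivSubtypeInter
        (fun l : List (Fin (n+r)) => l ∈ H)
        (fun l => (∀ x ∈ l, ¬ (x : ℕ) < r) ∧ l.length = s)).trans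
        (Equiv.subtypeEquivRight ?_))
      intro m
      constructor
      · rintro ⟨hm, hns, hlen⟩
        exact ⟨hm.2.1, hlen, hns⟩
      · rintro ⟨hnd, hlen, hns⟩
        refine ⟨⟨?_, hnd, by rw [hlen]; exact hsS, ?_⟩, hns, hlen⟩
        · intro hnil
          rw [hnil] at hlen
          simp only [List.length_nil] at hlen
          have := hS s hsS
          omega
        · intro i j hi hj hij hil
          exact absurd hi (hns i hil)
    · rw [if_neg hsS, Finset.card_eq_zero, Finset.filter_eq_empty_iff]
      intro l _
      rintro ⟨-, hlen⟩
      exact hsS (hlen ▸ l.2.2.2.1)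
  have hcardB : ∀ s : ℕ, (univ.filter (fun l : ↥H =>
      (¬ ∀ x ∈ l.1, ¬ (x : ℕ) < r) ∧ l.1.length = s)).card =
      if s ∈ S then s * r * n.descFactorial (s - 1) else 0 := by
    intro s
    by_cases hsS : s ∈ S
    · rw [if_pos hsS]
      obtain ⟨t, rfl⟩ : ∃ t, s = t + 1 :=
        ⟨s - 1, by have := hS s hsS; omega⟩
      have hc : (univ.filter (fun l : ↥H =>
          (¬ ∀ x ∈ l.1, ¬ (x : ℕ) < r) ∧ l.1.length = t + 1)).card =
          Nat.card {l : ↥H // (¬ ∀ x ∈ l.1, ¬ (x : ℕ) < r) ∧ l.1.length = t + 1} := by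
        rw [Nat.card_eq_fintype_card, Fintype.card_subtype]
      rw [hc, show (t + 1) * r * n.descFactorial (t + 1 - 1) = (t+1) * r * n.descFactorial t
        by simp, ← card_setB r n t]
      refine Nat.card_congr ((Equiv.subtypeSubtypeEquivSubtypeInter
        (fun l : List (Fin (n+r)) => l ∈ H)
        (fun l => (¬ ∀ x ∈ l, ¬ (x : ℕ) < r) ∧ l.length = t + 1)).trans
        (Equiv.subtypeEquivRight ?_))
      intro m
      constructor
      · rintro ⟨hm, hex, hlen⟩
        push_neg at hex
        exact ⟨⟨hm.2.1, hlen⟩, hex, hm.2.2.2⟩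
      · rintro ⟨⟨hnd, hlen⟩, hex, hno2⟩
        refine ⟨⟨?_, hnd, by rw [hlen]; exact hsS, hno2⟩, ?_, hlen⟩
        · intro hnil
          rw [hnil] at hlen
          simp at hlen
        · push_neg
          exact hex
    · rw [if_neg hsS, Finset.card_eq_zero, Finset.filter_eq_empty_iff]
      intro l _
      rintro ⟨-, hlen⟩
      exact hsS (hlen ▸ l.2.2.2.1)
  have key : ∀ (c D : ℕ → ℕ), ∑ s ∈ T, (if s ∈ S then c s else 0) * D s =
      ∑ s ∈ T.filter (· ∈ S), c s * D s := by
    intro c D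
    rw [Finset.sum_filter]
    exact Finset.sum_congr rfl (fun s _ => by rw [ite_mul, zero_mul])
  rw [show (∑ s ∈ T, (univ.filter (fun l : ↥H =>
        (∀ x ∈ l.1, ¬ (x : ℕ) < r) ∧ l.1.length = s)).card * srDoubly S r (n - s)) =
      ∑ s ∈ T, (if s ∈ S then n.descFactorial s else 0) * srDoubly S r (n - s) from
    Finset.sum_congr rfl (fun s _ => by rw [hcardA s])]
  rw [show (∑ s ∈ T, (univ.filter (fun l : ↥H =>
        (¬ ∀ x ∈ l.1, ¬ (x : ℕ) < r) ∧ l.1.length = s)).card *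
        srDoubly S (r - 1) (n - (s - 1))) =
      ∑ s ∈ T, (if s ∈ S then s * r * n.descFactorial (s - 1) else 0) *
        srDoubly S (r - 1) (n - (s - 1)) from
    Finset.sum_congr rfl (fun s _ => by rw [hcardB s])]
  rw [key, key]

/-- the recurrence
`D_{n,S,r} = Σ_{s∈S} (n)_s·D_{n−s,S,r} + r·Σ_{s∈S} s·(n)_{s−1}·D_{n−(s−1),S,r−1}`. -/
theorem srDoubly_recurrence (S : Set ℕ) (hS : ∀ s ∈ S, 0 < s) (r n : ℕ) (hr : 1 ≤ r) :
    (srDoubly S r n : ℤ) =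
      (∑ᶠ s ∈ S, (n.descFactorial s : ℤ) * srDoublyZ S r ((n : ℤ) - s)) +
      r * ∑ᶠ s ∈ S, (s : ℤ) * (n.descFactorial (s - 1) : ℤ) *
        srDoublyZ S (r - 1) ((n : ℤ) - ((s : ℤ) - 1)) := by
  classical
  set T : Finset ℕ := (Finset.range (n + r + 1)).filter (· ∈ S) with hT
  set f₁ : ℕ → ℤ := fun s => (n.descFactorial s : ℤ) * srDoublyZ S r ((n : ℤ) - s) with hf₁
  set f₂ : ℕ → ℤ := fun s => (s : ℤ) * (n.descFactorial (s - 1) : ℤ) *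
    srDoublyZ S (r - 1) ((n : ℤ) - ((s : ℤ) - 1)) with hf₂
  have hsupp₁ : S ∩ Function.support f₁ = ↑T ∩ Function.support f₁ := by
    ext s
    simp only [Set.mem_inter_iff, Function.mem_support, hT, Finset.coe_filter,
      Finset.mem_range, Set.mem_setOf_eq]
    constructor
    · rintro ⟨hs, hf⟩
      refine ⟨⟨?_, hs⟩, hf⟩
      by_contra hgt
      apply hf
      have : n < s := by omega
      simp [hf₁, Nat.descFactorial_eq_zero_iff_lt.mpr this]
    · rintro ⟨⟨-, hs⟩, hf⟩
      exact ⟨hs, hf⟩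
  have hsupp₂ : S ∩ Function.support f₂ = ↑T ∩ Function.support f₂ := by
    ext s
    simp only [Set.mem_inter_iff, Function.mem_support, hT, Finset.coe_filter,
      Finset.mem_range, Set.mem_setOf_eq]
    constructor
    · rintro ⟨hs, hf⟩
      refine ⟨⟨?_, hs⟩, hf⟩
      by_contra hgt
      apply hf
      have : n < s - 1 := by omega
      simp [hf₂, Nat.descFactorial_eq_zero_iff_lt.mpr this]
    · rintro ⟨⟨-, hs⟩, hf⟩
      exact ⟨hs, hf⟩
  rw [finsum_mem_eq_sum_of_inter_support_eq f₁ hsupp₁,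
    finsum_mem_eq_sum_of_inter_support_eq f₂ hsupp₂,
    srDoubly_rec_nat S hS r n hr]
  push_cast
  congr 1
  · refine Finset.sum_congr rfl (fun s hs => ?_)
    by_cases hsn : s ≤ n
    · have : (n : ℤ) - s = ((n - s : ℕ) : ℤ) := by push_cast; omega
      rw [hf₁]
      simp only
      rw [this, srDoublyZ_natCast]
    · have h0 : n.descFactorial s = 0 := Nat.descFactorial_eq_zero_iff_lt.mpr (by omega)
      rw [hf₁]
      simp [h0]
  · rw [Finset.mul_sum]
    refine Finset.sum_congr rfl (fun s hs => ?_)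
    have hs1 : 1 ≤ s := hS s (by simp [hT] at hs; exact hs.2)
    by_cases hsn : s - 1 ≤ n
    · have : (n : ℤ) - ((s : ℤ) - 1) = ((n - (s - 1) : ℕ) : ℤ) := by push_cast [hs1]; omega
      rw [hf₂]
      simp only
      rw [this, srDoublyZ_natCast]
      push_cast [hs1]
      ring
    · have h0 : n.descFactorial (s - 1) = 0 := Nat.descFactorial_eq_zero_iff_lt.mpr (by omega)
      rw [hf₂]
      simp [h0]
end

section
/- Let S be a set of positive integers, r ≥ 0 an integer, and n ≥ 0 an integer. Then the series Σ_{ℓ=0}^{∞} (1/2^ℓ)·C(r+ℓ, ℓ)·(Σ_{k=0}^{n} L_{S,r}(n,k)·(ℓ)_k) of real numbers converges, and D_{n,S,r} = (r!/2^{r+1})·Σ_{ℓ=0}^{∞} (1/2^ℓ)·C(r+ℓ, ℓ)·Σ_{k=0}^{n} L_{S,r}(n,k)·(ℓ)_k, where (ℓ)_k = ℓ(ℓ−1)⋯(ℓ−k+1) is the falling factorial. -/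
open Finset
open scoped Classical

/-- A partition of `Fin N` into nonempty lists of distinct elements:
every element lies in exactly one list of `P`. -/
def IsListPartition {N : ℕ} (P : Finset (List (Fin N))) : Prop :=
  (∀ l ∈ P, l ≠ [] ∧ l.Nodup) ∧ ∀ x : Fin N, ∃! l, l ∈ P ∧ x ∈ l

/-- The set of partitions of `{1,…,n+r}` (encoded as `Fin (n+r)`) into `k+r` nonempty
lists whose lengths lie in `S`, such that the first `r` elements lie in distinct lists. -/
def srLahSet (S : Set ℕ) (r n k : ℕ) : Set (Finset (List (Fin (n + r)))) :=
  {P | IsListPartition P ∧ P.card = k + r ∧ (∀ l ∈ P, l.length ∈ S) ∧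
    ∀ i j : Fin (n + r), (i : ℕ) < r → (j : ℕ) < r → i ≠ j →
      ∀ l ∈ P, i ∈ l → j ∉ l}

/-- The `(S,r)`-Lah number `L_{S,r}(n,k)`. -/
noncomputable def srLah (S : Set ℕ) (r n k : ℕ) : ℕ := Nat.card (srLahSet S r n k)

/-- The `(S,r)`-Lah number with integer arguments, zero for negative arguments. -/
noncomputable def srLahZ (S : Set ℕ) (r : ℕ) (n k : ℤ) : ℤ :=
  if 0 ≤ n ∧ 0 ≤ k then srLah S r n.toNat k.toNat else 0

lemma aux_nat (r k ℓ : ℕ) :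
    (r + ℓ).choose ℓ * ℓ.descFactorial k = (r + ℓ).choose (r + k) * (r + k).descFactorial k := by
  rw [Nat.descFactorial_eq_factorial_mul_choose, Nat.descFactorial_eq_factorial_mul_choose]
  rcases lt_or_ge ℓ k with h | h
  · rw [Nat.choose_eq_zero_of_lt h, Nat.choose_eq_zero_of_lt (Nat.add_lt_add_left h r)]
    ring
  · have h1 : (r + ℓ).choose ℓ * ℓ.choose k = (r + ℓ).choose k * (r + ℓ - k).choose (ℓ - k) :=
      Nat.choose_mul h
    have h2 : (r + ℓ).choose (r + k) * (r + k).choose k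
        = (r + ℓ).choose k * (r + ℓ - k).choose (r + k - k) := Nat.choose_mul (by omega)
    have h3 : (r + ℓ - k).choose (ℓ - k) = (r + ℓ - k).choose r := by
      have e : ℓ - k = (r + ℓ - k) - r := by omega
      rw [e, Nat.choose_symm (by omega)]
    have key : (r + ℓ).choose ℓ * ℓ.choose k = (r + ℓ).choose (r + k) * (r + k).choose k := by
      rw [h1, h2, h3, show r + k - k = r by omega]
    calc (r + ℓ).choose ℓ * (k.factorial * ℓ.choose k)
        = k.factorial * ((r + ℓ).choose ℓ * ℓ.choose k) := by ring
      _ = k.factorial * ((r + ℓ).choose (r + k) * (r + k).choose k) := by rw [key]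
      _ = (r + ℓ).choose (r + k) * (k.factorial * (r + k).choose k) := by ring

lemma aux_hasSum (r k : ℕ) :
    HasSum (fun ℓ : ℕ => (1 / 2 ^ ℓ : ℝ) * ((r + ℓ).choose ℓ : ℝ) * (ℓ.descFactorial k : ℝ))
      (((r + k).descFactorial k : ℝ) * 2 ^ (r + 1)) := by
  have h2 : ‖(1/2 : ℝ)‖ < 1 := by norm_num
  have H0 : HasSum (fun m : ℕ => ((m + (r + k)).choose (r + k) : ℝ) * (1/2 : ℝ) ^ m)
      (1 / (1 - 1/2) ^ (r + k + 1)) := hasSum_choose_mul_geometric_of_norm_lt_one (r + k) h2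
  set g : ℕ → ℝ := fun ℓ => ((r + ℓ).choose (r + k) : ℝ) * (1/2 : ℝ) ^ ℓ with hg
  have H1 : HasSum (fun m : ℕ => g (m + k)) ((1/2 : ℝ) ^ k * (1 / (1 - 1/2) ^ (r + k + 1))) := by
    have := H0.mul_left ((1/2 : ℝ) ^ k)
    convert this using 2 with m
    · rfl
    rw [hg]
    simp only []
    rw [show r + (m + k) = m + (r + k) by omega, pow_add]
    ring
  have H2 : HasSum g ((1/2 : ℝ) ^ k * (1 / (1 - 1/2) ^ (r + k + 1)) + ∑ i ∈ Finset.range k, g i) :=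
    (hasSum_nat_add_iff k).mp H1
  have hzero : ∑ i ∈ Finset.range k, g i = 0 := by
    apply Finset.sum_eq_zero
    intro i hi
    rw [hg]
    simp only []
    rw [Nat.choose_eq_zero_of_lt (by simp at hi; omega)]
    simp
  rw [hzero, add_zero] at H2
  have hval : (1/2 : ℝ) ^ k * (1 / (1 - 1/2) ^ (r + k + 1)) = 2 ^ (r + 1) := by
    have h : ((1:ℝ) - 1/2) = 1/2 := by norm_num
    rw [h, one_div, one_div, inv_pow, inv_pow, inv_inv, inv_mul_eq_iff_eq_mul₀ (by positivity),
      ← pow_add]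
    congr 1
    omega
  rw [hval] at H2
  have := H2.mul_left (((r + k).descFactorial k : ℝ))
  convert this using 2 with ℓ
  · rfl
  rw [hg]
  simp only []
  have := aux_nat r k ℓ
  have hcast : ((r + ℓ).choose ℓ : ℝ) * (ℓ.descFactorial k : ℝ)
      = ((r + ℓ).choose (r + k) : ℝ) * ((r + k).descFactorial k : ℝ) := by
    exact_mod_cast congrArg (Nat.cast : ℕ → ℝ) this
  rw [one_div, ← inv_pow, mul_assoc, hcast, ← one_div]
  ring


section Comb

variable {S : Set ℕ} {r n : ℕ}

lemma D_nodup {L : List (List (Fin (n + r)))} (hL : L ∈ srDoublySet S r n) : L.Nodup := by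
  obtain ⟨h1, h2, -, -⟩ := hL
  refine List.Pairwise.imp_of_mem ?_ h2
  intro a b ha hb hab
  intro hEq
  subst hEq
  obtain ⟨x, hx⟩ := List.exists_mem_of_ne_nil a (h1 a ha).1
  exact hab x hx hx

lemma D_disj {L : List (List (Fin (n + r)))} (hL : L ∈ srDoublySet S r n) :
    ∀ ⦃a⦄, a ∈ L → ∀ ⦃b⦄, b ∈ L → a ≠ b → ∀ x ∈ a, x ∉ b := by
  have hsymm : Symmetric (fun (l l' : List (Fin (n + r))) => ∀ x ∈ l, x ∉ l') :=
    fun l l' h x hxb hxa => h x hxa hxb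
  haveI : Std.Symm (fun (l l' : List (Fin (n + r))) => ∀ x ∈ l, x ∉ l') := ⟨hsymm⟩
  exact hL.2.1.forall

lemma D_toFinset_lah {L : List (List (Fin (n + r)))} (hL : L ∈ srDoublySet S r n) :
    r ≤ L.length ∧ L.length ≤ n + r ∧ L.toFinset ∈ srLahSet S r n (L.length - r) := by
  obtain ⟨h1, h2, h3, h4⟩ := hL
  have hnd : L.Nodup := D_nodup ⟨h1, h2, h3, h4⟩
  have hdisj := D_disj (S := S) (r := r) (n := n) ⟨h1, h2, h3, h4⟩
  have hcard : L.toFinset.card = L.length := List.toFinset_card_of_nodup hnd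
  have hblk : ∀ x : Fin (n + r), ∃ l, l ∈ L ∧ x ∈ l := by
    intro x; obtain ⟨l, h, h'⟩ := h3 x; exact ⟨l, h, h'⟩
  set blk : Fin (n + r) → List (Fin (n + r)) := fun x => (hblk x).choose with hblkdef
  have hblk1 : ∀ x, blk x ∈ L := fun x => (hblk x).choose_spec.1
  have hblk2 : ∀ x, x ∈ blk x := fun x => (hblk x).choose_spec.2
  have hpart : IsListPartition L.toFinset := by
    constructor
    · intro l hl
      rw [List.mem_toFinset] at hl
      exact ⟨(h1 l hl).1, (h1 l hl).2.1⟩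
    · intro x
      refine ⟨blk x, ⟨List.mem_toFinset.mpr (hblk1 x), hblk2 x⟩, ?_⟩
      rintro l' ⟨hl'L, hxl'⟩
      rw [List.mem_toFinset] at hl'L
      by_contra hne
      exact hdisj hl'L (hblk1 x) hne x hxl' (hblk2 x)
  have hr : r ≤ L.length := by
    have hle : r ≤ n + r := by omega
    have hinj : ((Finset.univ : Finset (Fin r)).image (fun i => Fin.castLE hle i)).card
        ≤ L.toFinset.card := by
      apply Finset.card_le_card_of_injOn blk
      · intro x hx
        exact List.mem_toFinset.mpr (hblk1 x)
      · intro x hx y hy hxy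
        by_contra hne
        simp only [Finset.coe_image, Set.mem_image, Finset.coe_univ, Set.mem_univ,
          true_and] at hx hy
        obtain ⟨i, rfl⟩ := hx
        obtain ⟨j, rfl⟩ := hy
        have hxr : ((Fin.castLE hle i : Fin (n + r)) : ℕ) < r := i.isLt
        have hyr : ((Fin.castLE hle j : Fin (n + r)) : ℕ) < r := j.isLt
        refine h4 _ _ hxr hyr hne (blk (Fin.castLE hle i)) (hblk1 _) (hblk2 _) ?_
        rw [hxy]
        exact hblk2 _
    have himg : ((Finset.univ : Finset (Fin r)).image (fun i => Fin.castLE hle i)).card = r := by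
      rw [Finset.card_image_of_injective _ (Fin.castLE_injective hle), Finset.card_univ,
        Fintype.card_fin]
    omega
  have hlen : L.length ≤ n + r := by
    by_cases hLnil : L = []
    · subst hLnil; simp
    · obtain ⟨l0, hl0⟩ := List.exists_mem_of_ne_nil L hLnil
      obtain ⟨x0, -⟩ := List.exists_mem_of_ne_nil l0 (h1 l0 hl0).1
      haveI : Inhabited (Fin (n + r)) := ⟨x0⟩
      have hc : L.toFinset.card ≤ (Finset.univ : Finset (Fin (n + r))).card := by
        apply Finset.card_le_card_of_injOn (fun l => l.head!)
        · intro l hl; exact Finset.mem_coe.mpr (Finset.mem_univ _)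
        · intro a ha b hb hab
          simp only [Finset.mem_coe, List.mem_toFinset] at ha hb
          by_contra hne
          have hha : a.head! ∈ a := List.head!_mem_self (h1 a ha).1
          have hhb : b.head! ∈ b := List.head!_mem_self (h1 b hb).1
          have hab' : a.head! = b.head! := hab
          rw [← hab'] at hhb
          exact hdisj ha hb hne _ hha hhb
      rw [hcard, Finset.card_univ, Fintype.card_fin] at hc
      exact hc
  refine ⟨hr, hlen, hpart, ?_, ?_, ?_⟩
  · omega
  · intro l hl
    rw [List.mem_toFinset] at hl
    exact (h1 l hl).2.2
  · intro i j hi hj hij l hl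
    rw [List.mem_toFinset] at hl
    exact h4 i j hi hj hij l hl

lemma mem_D_of_nodup_toFinset {k : ℕ} {P : Finset (List (Fin (n + r)))}
    (hP : P ∈ srLahSet S r n k) {L : List (List (Fin (n + r)))}
    (hnd : L.Nodup) (hLP : L.toFinset = P) : L ∈ srDoublySet S r n := by
  obtain ⟨⟨hP1, hP2⟩, hcard, hlen, hspec⟩ := hP
  have hmem : ∀ l, l ∈ L ↔ l ∈ P := by
    intro l; rw [← hLP, List.mem_toFinset]
  refine ⟨?_, ?_, ?_, ?_⟩
  · intro l hl
    exact ⟨(hP1 l ((hmem l).mp hl)).1, (hP1 l ((hmem l).mp hl)).2, hlen l ((hmem l).mp hl)⟩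
  · refine List.Pairwise.imp_of_mem ?_ hnd
    intro a b ha hb hne x hxa hxb
    obtain ⟨l, -, huniq⟩ := hP2 x
    exact hne ((huniq a ⟨(hmem a).mp ha, hxa⟩).trans (huniq b ⟨(hmem b).mp hb, hxb⟩).symm)
  · intro x
    obtain ⟨l, ⟨hlP, hxl⟩, -⟩ := hP2 x
    exact ⟨l, (hmem l).mpr hlP, hxl⟩
  · intro i j hi hj hij l hl hil
    exact hspec i j hi hj hij l ((hmem l).mp hl) hil

lemma mem_D_iff_perm {k : ℕ} {P : Finset (List (Fin (n + r)))} (hP : P ∈ srLahSet S r n k)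
    (L : List (List (Fin (n + r)))) :
    (L ∈ srDoublySet S r n ∧ L.toFinset = P) ↔ List.Perm L P.toList := by
  constructor
  · rintro ⟨hL, hLP⟩
    apply List.perm_of_nodup_nodup_toFinset_eq (D_nodup hL) P.nodup_toList
    rw [hLP, Finset.toList_toFinset]
  · intro hperm
    have hnd : L.Nodup := (hperm.nodup_iff).mpr P.nodup_toList
    have hLP : L.toFinset = P := by
      rw [List.toFinset_eq_of_perm _ _ hperm, Finset.toList_toFinset]
    exact ⟨mem_D_of_nodup_toFinset hP hnd hLP, hLP⟩

lemma D_finite : (srDoublySet S r n).Finite := by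
  have hT : {l : List (Fin (n + r)) | l.length ≤ n + r}.Finite := List.finite_length_le _ _
  haveI := hT.to_subtype
  have hT2 : {L : List {l : List (Fin (n + r)) | l.length ≤ n + r} |
      L.length ≤ n + r}.Finite := List.finite_length_le _ _
  haveI := hT2.to_subtype
  haveI : Finite (srDoublySet S r n) := by
    have hmemlen : ∀ (L : srDoublySet S r n), ∀ l ∈ L.1, l.length ≤ n + r := by
      rintro ⟨L, hL⟩ l hl
      have := (hL.1 l hl).2.1.length_le_card
      simpa using this
    have hlen : ∀ (L : srDoublySet S r n),
        (L.1.attachWith (fun l => l ∈ {l : List (Fin (n + r)) | l.length ≤ n + r})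
          (hmemlen L)).length ≤ n + r := by
      rintro ⟨L, hL⟩
      rw [List.length_attachWith]
      exact (D_toFinset_lah hL).2.1
    apply Finite.of_injective (fun L : srDoublySet S r n =>
      (⟨L.1.attachWith (fun l => l ∈ {l : List (Fin (n + r)) | l.length ≤ n + r})
        (hmemlen L), hlen L⟩ : {L : List {l : List (Fin (n + r)) | l.length ≤ n + r} |
          L.length ≤ n + r}))
    intro L1 L2 h
    apply Subtype.ext
    have h' := congrArg (fun z : {L : List {l : List (Fin (n + r)) | l.length ≤ n + r} |
        L.length ≤ n + r} => z.1.map Subtype.val) h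
    simpa only [List.attachWith_map_subtype_val] using h'
  exact Set.toFinite _

lemma srDoubly_eq_sum (S : Set ℕ) (r n : ℕ) :
    srDoubly S r n = ∑ k ∈ Finset.range (n + 1), (k + r).factorial * srLah S r n k := by
  classical
  have hD : (srDoublySet S r n).Finite := D_finite
  set DF := hD.toFinset with hDF
  have hmemDF : ∀ L, L ∈ DF ↔ L ∈ srDoublySet S r n := fun L => hD.mem_toFinset
  set PF := DF.image List.toFinset with hPF
  have hPFfact : ∀ P ∈ PF, r ≤ P.card ∧ P.card ≤ n + r ∧ P ∈ srLahSet S r n (P.card - r) := by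
    intro P hP
    obtain ⟨L, hL, rfl⟩ := Finset.mem_image.mp hP
    rw [hmemDF] at hL
    obtain ⟨h1, h2, h3⟩ := D_toFinset_lah hL
    have hc : L.toFinset.card = L.length := List.toFinset_card_of_nodup (D_nodup hL)
    rw [hc]
    exact ⟨h1, h2, h3⟩
  have h0 : srDoubly S r n = DF.card := by
    rw [srDoubly, Nat.card_coe_set_eq, Set.ncard_eq_toFinset_card _ hD]
  have h1 : DF.card = ∑ P ∈ PF, (DF.filter fun L => L.toFinset = P).card :=
    Finset.card_eq_sum_card_image List.toFinset DF
  have h2 : ∀ P ∈ PF, (DF.filter fun L => L.toFinset = P).card = P.card.factorial := by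
    intro P hP
    obtain ⟨-, -, hPl⟩ := hPFfact P hP
    have heq : DF.filter (fun L => L.toFinset = P) = P.toList.permutations.toFinset := by
      ext L
      rw [Finset.mem_filter, List.mem_toFinset, List.mem_permutations, hmemDF]
      exact mem_D_iff_perm hPl L
    rw [heq, List.toFinset_card_of_nodup (List.nodup_permutations _ P.nodup_toList),
      List.length_permutations, Finset.length_toList]
  have h3 : DF.card = ∑ P ∈ PF, P.card.factorial := by
    rw [h1]; exact Finset.sum_congr rfl h2
  have h4 : ∑ P ∈ PF, P.card.factorial
      = ∑ k ∈ Finset.range (n + 1), ∑ P ∈ PF.filter (fun P => P.card - r = k),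
          P.card.factorial := by
    rw [Finset.sum_fiberwise_of_maps_to]
    intro P hP
    obtain ⟨ha, hb, -⟩ := hPFfact P hP
    rw [Finset.mem_range]; omega
  have h6 : ∀ k ∈ Finset.range (n + 1),
      srLah S r n k = (PF.filter (fun P => P.card - r = k)).card := by
    intro k hk
    have h5 : srLahSet S r n k = ↑(PF.filter (fun P => P.card - r = k)) := by
      ext P
      rw [Finset.mem_coe, Finset.mem_filter]
      constructor
      · intro hPk
        have hcard : P.card = k + r := hPk.2.1
        have hD' : P.toList ∈ srDoublySet S r n ∧ (P.toList).toFinset = P :=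
          (mem_D_iff_perm hPk P.toList).mpr (List.Perm.refl _)
        exact ⟨Finset.mem_image.mpr ⟨P.toList, (hmemDF _).mpr hD'.1, hD'.2⟩, by omega⟩
      · rintro ⟨hPF', hPk⟩
        obtain ⟨ha, -, hc⟩ := hPFfact P hPF'
        rwa [hPk] at hc
    rw [srLah, h5, Nat.card_coe_set_eq, Set.ncard_coe_finset]
  have h7 : ∀ k ∈ Finset.range (n + 1),
      ∑ P ∈ PF.filter (fun P => P.card - r = k), P.card.factorial
        = (k + r).factorial * srLah S r n k := by
    intro k hk
    have hconst : ∀ P ∈ PF.filter (fun P => P.card - r = k),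
        P.card.factorial = (k + r).factorial := by
      intro P hP
      obtain ⟨hPmem, hPk⟩ := Finset.mem_filter.mp hP
      obtain ⟨ha, -, -⟩ := hPFfact P hPmem
      congr 1
      omega
    rw [Finset.sum_congr rfl hconst, Finset.sum_const, h6 k hk, smul_eq_mul, mul_comm]
  rw [h0, h3, h4]
  exact Finset.sum_congr rfl h7

end Comb

/-- the Dobinski-type formula
`D_{n,S,r} = (r!/2^{r+1})·Σ_{ℓ≥0} (1/2^ℓ)·C(r+ℓ,ℓ)·Σ_{k=0}^n L_{S,r}(n,k)·(ℓ)_k`,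
the series being convergent. -/
theorem srDoubly_series (S : Set ℕ) (hS : ∀ s ∈ S, 0 < s) (r n : ℕ) :
    Summable (fun ℓ : ℕ => (1 / 2 ^ ℓ : ℝ) * ((r + ℓ).choose ℓ : ℝ) *
      ∑ k ∈ Finset.range (n + 1), (srLah S r n k : ℝ) * (ℓ.descFactorial k : ℝ)) ∧
    (srDoubly S r n : ℝ) =
      ((r.factorial : ℝ) / 2 ^ (r + 1)) *
        ∑' ℓ : ℕ, (1 / 2 ^ ℓ : ℝ) * ((r + ℓ).choose ℓ : ℝ) *
          ∑ k ∈ Finset.range (n + 1), (srLah S r n k : ℝ) * (ℓ.descFactorial k : ℝ) := by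
  have hsum : ∀ k : ℕ, HasSum (fun ℓ : ℕ => (1 / 2 ^ ℓ : ℝ) * ((r + ℓ).choose ℓ : ℝ) *
      (ℓ.descFactorial k : ℝ)) (((r + k).descFactorial k : ℝ) * 2 ^ (r + 1)) := aux_hasSum r
  have hmain : HasSum (fun ℓ : ℕ => (1 / 2 ^ ℓ : ℝ) * ((r + ℓ).choose ℓ : ℝ) *
      ∑ k ∈ Finset.range (n + 1), (srLah S r n k : ℝ) * (ℓ.descFactorial k : ℝ))
      (∑ k ∈ Finset.range (n + 1), (srLah S r n k : ℝ) *
        (((r + k).descFactorial k : ℝ) * 2 ^ (r + 1))) := by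
    have hs := hasSum_sum (s := Finset.range (n + 1))
      (f := fun k ℓ => (srLah S r n k : ℝ) *
        ((1 / 2 ^ ℓ : ℝ) * ((r + ℓ).choose ℓ : ℝ) * (ℓ.descFactorial k : ℝ)))
      (a := fun k => (srLah S r n k : ℝ) * (((r + k).descFactorial k : ℝ) * 2 ^ (r + 1)))
      (fun k _ => (hsum k).mul_left _)
    have hfun : (fun ℓ : ℕ => (1 / 2 ^ ℓ : ℝ) * ((r + ℓ).choose ℓ : ℝ) *
        ∑ k ∈ Finset.range (n + 1), (srLah S r n k : ℝ) * (ℓ.descFactorial k : ℝ))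
        = fun ℓ : ℕ => ∑ k ∈ Finset.range (n + 1), (srLah S r n k : ℝ) *
          ((1 / 2 ^ ℓ : ℝ) * ((r + ℓ).choose ℓ : ℝ) * (ℓ.descFactorial k : ℝ)) := by
      funext ℓ
      rw [Finset.mul_sum]
      exact Finset.sum_congr rfl fun k _ => by ring
    rw [hfun]
    exact hs
  refine ⟨hmain.summable, ?_⟩
  rw [hmain.tsum_eq, srDoubly_eq_sum S r n, Finset.mul_sum]
  push_cast
  refine Finset.sum_congr rfl fun k hk => ?_
  have hfacn : r.factorial * (r + k).descFactorial k = (k + r).factorial := by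
    have h := Nat.factorial_mul_descFactorial (show k ≤ r + k by omega)
    rw [show r + k - k = r by omega] at h
    rw [h, Nat.add_comm]
  have hfac : (r.factorial : ℝ) * ((r + k).descFactorial k : ℝ)
      = ((k + r).factorial : ℝ) := by exact_mod_cast hfacn
  have h2 : (2 : ℝ) ^ (r + 1) ≠ 0 := by positivity
  rw [div_mul_eq_mul_div, eq_comm, div_eq_iff h2]
  linear_combination ((srLah S r n k : ℝ) * 2 ^ (r + 1)) * hfac
end
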